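/- Let k̄ be continuous and bounded. Let (c_n,w_n) and (c,w) be pairs in W^{1,1}((0,T); ℝ^𝒴_+ × ℝ^ℛ_+) with ẇ_n ≥ 0, ẇ ≥ 0 a.e., and suppose (c_n,w_n) → (c,w) in the hybrid sense as n → ∞. Then liminf_{n→∞} J(c_n,w_n) ≥ J(c,w). -/

import Mathlib

open MeasureTheory Real Set Filter Topology

open scoped NNReal ENNReal

/-- The Boltzmann entropy function `s(j|k)`, valued in `[0,∞]`. -/
noncomputable def bes (j k : ℝ) : ENNReal :=
  if j = 0 then ENNReal.ofReal k
  else if k = 0 then ⊤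
  else ENNReal.ofReal (j * Real.log (j / k) - j + k)

lemma exp_lin (x y : ℝ) : Real.exp y * (x - y) ≤ Real.exp x - Real.exp y := by
  have h := Real.add_one_le_exp (x - y)
  have h2 : Real.exp x = Real.exp y * Real.exp (x - y) := by
    rw [← Real.exp_add]; ring_nf
  nlinarith [Real.exp_pos y]

/-- concavity gap inequality -/
lemma gap_ineq (x y j k : ℝ) (hk : 0 ≤ k) :
    (x*j - (Real.exp x - 1)*k) - (y*j - (Real.exp y - 1)*k) ≤ (x - y) * (j - Real.exp y * k) := by
  have := mul_le_mul_of_nonneg_right (exp_lin x y) hk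
  nlinarith

/-- duality inequality -/
lemma dual_le_bes (b j k : ℝ) (hj : 0 ≤ j) (hk : 0 ≤ k) :
    ENNReal.ofReal (b*j - (Real.exp b - 1)*k) ≤ bes j k := by
  unfold bes
  rcases eq_or_lt_of_le hj with hj0 | hj0
  · subst hj0
    rw [if_pos rfl]
    apply ENNReal.ofReal_le_ofReal
    nlinarith [Real.exp_pos b]
  rw [if_neg (ne_of_gt hj0)]
  rcases eq_or_lt_of_le hk with hk0 | hk0
  · rw [if_pos hk0.symm]; exact le_top
  rw [if_neg (ne_of_gt hk0)]
  apply ENNReal.ofReal_le_ofReal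
  have hy : Real.exp (Real.log (j/k)) = j/k := Real.exp_log (by positivity)
  have h := gap_ineq b (Real.log (j/k)) j k hk
  rw [hy] at h
  have hjk : (j/k)*k = j := div_mul_cancel₀ j (ne_of_gt hk0)
  have h2 : (j / k - 1) * k = j - k := by rw [sub_mul, hjk]; ring
  have h3 : j - j / k * k = 0 := by rw [hjk]; ring
  rw [h2, h3, mul_zero] at h
  linarith

noncomputable def betaF (m j k : ℝ) : ℝ :=
  if j = 0 then -m else if k = 0 then m else max (-m) (min m (Real.log (j/k)))

noncomputable def gF (m j k : ℝ) : ℝ :=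
  betaF m j k * j - (Real.exp (betaF m j k) - 1) * k

lemma betaF_mem (m j k : ℝ) (hm : 0 ≤ m) : -m ≤ betaF m j k ∧ betaF m j k ≤ m := by
  unfold betaF
  split_ifs with h1 h2
  · exact ⟨le_refl _, by linarith⟩
  · exact ⟨by linarith, le_refl _⟩
  · constructor
    · exact le_max_left _ _
    · exact max_le (by linarith) (min_le_left _ _)

/-- restricted duality : partial sup over `[-m,m]` is attained at `betaF` -/
lemma dual_le_gF (m b j k : ℝ) (hm : 0 ≤ m) (hb : -m ≤ b) (hb' : b ≤ m)
    (hj : 0 ≤ j) (hk : 0 ≤ k) :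
    b*j - (Real.exp b - 1)*k ≤ gF m j k := by
  unfold gF betaF
  rcases eq_or_lt_of_le hj with hj0 | hj0
  · subst j
    rw [if_pos rfl]
    have : Real.exp (-m) ≤ Real.exp b := Real.exp_le_exp.mpr hb
    nlinarith
  rw [if_neg (ne_of_gt hj0)]
  rcases eq_or_lt_of_le hk with hk0 | hk0
  · rw [if_pos hk0.symm, ← hk0]
    nlinarith
  rw [if_neg (ne_of_gt hk0)]
  set y := Real.log (j/k) with hy
  have hey : Real.exp y = j/k := Real.exp_log (by positivity)
  have hjk : (j/k)*k = j := div_mul_cancel₀ j (ne_of_gt hk0)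
  set β := max (-m) (min m y) with hβ
  have hgap := gap_ineq b β j k hk
  have hkey : (b - β) * (j - Real.exp β * k) ≤ 0 := by
    rcases le_total y (-m) with h | h
    · have hβ' : β = -m := by
        rw [hβ, min_eq_right (by linarith), max_eq_left h]
      rw [hβ']
      apply mul_nonpos_of_nonneg_of_nonpos
      · linarith
      · have : Real.exp y ≤ Real.exp (-m) := Real.exp_le_exp.mpr h
        nlinarith
    rcases le_total m y with h' | h'
    · have hβ' : β = m := by
        rw [hβ, min_eq_left h', max_eq_right (by linarith)]
      rw [hβ']
      apply mul_nonpos_of_nonpos_of_nonneg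
      · linarith
      · have : Real.exp m ≤ Real.exp y := Real.exp_le_exp.mpr h'
        nlinarith
    · have hβ' : β = y := by
        rw [hβ, min_eq_right h', max_eq_right h]
      rw [hβ', hey]
      rw [hjk]; ring_nf; simp
  linarith

lemma gF_nonneg (m j k : ℝ) (hm : 0 ≤ m) (hj : 0 ≤ j) (hk : 0 ≤ k) : 0 ≤ gF m j k := by
  have := dual_le_gF m 0 j k hm (by linarith) hm hj hk
  simpa using this

lemma gF_le_bes (m j k : ℝ) (hj : 0 ≤ j) (hk : 0 ≤ k) :
    ENNReal.ofReal (gF m j k) ≤ bes j k := dual_le_bes _ j k hj hk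

lemma gF_mono (m m' j k : ℝ) (hm : 0 ≤ m) (hmm : m ≤ m') (hj : 0 ≤ j) (hk : 0 ≤ k) :
    gF m j k ≤ gF m' j k := by
  obtain ⟨h1, h2⟩ := betaF_mem m j k hm
  exact dual_le_gF m' (betaF m j k) j k (by linarith) (by linarith) (by linarith) hj hk

lemma gF_bound (m j k K : ℝ) (hm : 0 ≤ m) (hk : 0 ≤ k) (hkK : k ≤ K) :
    gF m j k ≤ m * |j| + (Real.exp m + 1) * K := by
  obtain ⟨h1, h2⟩ := betaF_mem m j k hm
  unfold gF
  have e1 : betaF m j k * j ≤ m * |j| := by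
    calc betaF m j k * j ≤ |betaF m j k * j| := le_abs_self _
    _ = |betaF m j k| * |j| := abs_mul _ _
    _ ≤ m * |j| := by
        apply mul_le_mul_of_nonneg_right _ (abs_nonneg _)
        rw [abs_le]; exact ⟨h1, h2⟩
  have e2 : -((Real.exp (betaF m j k) - 1) * k) ≤ (Real.exp m + 1) * K := by
    have hexp : Real.exp (betaF m j k) ≤ Real.exp m := Real.exp_le_exp.mpr h2
    have h0 : (0:ℝ) < Real.exp (betaF m j k) := Real.exp_pos _
    nlinarith
  linarith

lemma gF_tendsto (j k : ℝ) (hj : 0 ≤ j) (hk : 0 ≤ k) :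
    Tendsto (fun m : ℕ => ENNReal.ofReal (gF m j k)) atTop (𝓝 (bes j k)) := by
  rcases eq_or_lt_of_le hj with hj0 | hj0
  · subst j
    have hg : ∀ m : ℕ, gF m 0 k = (1 - Real.exp (-(m:ℝ))) * k := by
      intro m; unfold gF betaF; rw [if_pos rfl]; ring
    have : bes 0 k = ENNReal.ofReal k := by unfold bes; rw [if_pos rfl]
    rw [this]
    simp_rw [hg]
    apply (ENNReal.continuous_ofReal.tendsto k).comp
    have h1 : Tendsto (fun m : ℕ => Real.exp (-(m:ℝ))) atTop (𝓝 0) := by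
      apply Real.tendsto_exp_atBot.comp
      exact tendsto_neg_atBot_iff.mpr tendsto_natCast_atTop_atTop
    have : Tendsto (fun m : ℕ => (1 - Real.exp (-(m:ℝ))) * k) atTop (𝓝 ((1 - 0) * k)) := by
      exact ((tendsto_const_nhds.sub h1).mul tendsto_const_nhds)
    simpa using this
  rcases eq_or_lt_of_le hk with hk0 | hk0
  · subst k
    have hg : ∀ m : ℕ, gF m j 0 = (m:ℝ) * j := by
      intro m; unfold gF betaF; rw [if_neg (ne_of_gt hj0), if_pos rfl]; ring
    have : bes j 0 = ⊤ := by unfold bes; rw [if_neg (ne_of_gt hj0), if_pos rfl]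
    rw [this]
    simp_rw [hg]
    apply ENNReal.tendsto_ofReal_atTop.comp
    exact Tendsto.atTop_mul_const hj0 tendsto_natCast_atTop_atTop
  · set y := Real.log (j/k) with hy
    have hey : Real.exp y = j/k := Real.exp_log (by positivity)
    have hb : bes j k = ENNReal.ofReal (j * y - j + k) := by
      unfold bes; rw [if_neg (ne_of_gt hj0), if_neg (ne_of_gt hk0)]
    rw [hb]
    apply Tendsto.congr' _ tendsto_const_nhds
    filter_upwards [eventually_ge_atTop (Nat.ceil |y|)] with m hm
    have hm' : |y| ≤ (m:ℝ) := by
      calc |y| ≤ (Nat.ceil |y| : ℝ) := Nat.le_ceil _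
      _ ≤ (m:ℝ) := by exact_mod_cast hm
    rw [abs_le] at hm'
    have hβ : betaF m j k = y := by
      unfold betaF
      rw [if_neg (ne_of_gt hj0), if_neg (ne_of_gt hk0)]
      rw [min_eq_right hm'.2, max_eq_right hm'.1]
    unfold gF
    rw [hβ, hey]
    congr 1
    have : j/k*k = j := div_mul_cancel₀ j (ne_of_gt hk0)
    nlinarith [hy]

lemma ofReal_sum_le {ι : Type*} (s : Finset ι) (f : ι → ℝ) :
    ENNReal.ofReal (∑ i ∈ s, f i) ≤ ∑ i ∈ s, ENNReal.ofReal (f i) := by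
  induction s using Finset.cons_induction with
  | empty => simp
  | cons a s ha ih =>
    rw [Finset.sum_cons, Finset.sum_cons]
    exact (ENNReal.ofReal_add_le).trans (add_le_add_right ih _)

lemma exp_diff_le (m x y : ℝ) (hx : x ≤ m) (hy : y ≤ m) :
    |Real.exp x - Real.exp y| ≤ Real.exp m * |x - y| := by
  have key : ∀ a b : ℝ, a ≤ m → b ≤ m → b ≤ a → Real.exp a - Real.exp b ≤ Real.exp m * |a - b| := by
    intro a b ha hb hba
    have h1 := exp_lin b a
    have h2 : Real.exp a ≤ Real.exp m := Real.exp_le_exp.mpr ha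
    have : |a - b| = a - b := abs_of_nonneg (by linarith)
    nlinarith [Real.exp_pos a]
  rcases le_total (Real.exp y) (Real.exp x) with h | h
  · rw [abs_of_nonneg (by linarith)]
    exact key x y hx hy (Real.exp_le_exp.mp h)
  · rw [abs_of_nonpos (by linarith)]
    have := key y x hy hx (Real.exp_le_exp.mp h)
    rw [abs_sub_comm] at this
    linarith

lemma ofReal_max_zero (x : ℝ) : ENNReal.ofReal (max x 0) = ENNReal.ofReal x := by
  rcases le_total x 0 with h | h
  · rw [max_eq_right h, ENNReal.ofReal_of_nonpos h, ENNReal.ofReal_zero]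
  · rw [max_eq_left h]

/-- cutoff function -/
lemma exists_cutoff (a b T : ℝ) (ha : 0 < a) (hb : b < T) :
    ∃ χ : ℝ → ℝ, Continuous χ ∧ (∀ t, 0 ≤ χ t ∧ χ t ≤ 1) ∧ (∀ t ∈ Icc a b, χ t = 1) ∧
      tsupport χ ⊆ Ioo 0 T ∧ HasCompactSupport χ := by
  set u := a/2 with hu
  set d := (T-b)/2 with hd
  have hu0 : 0 < u := by positivity
  have hd0 : 0 < d := by rw [hd]; linarith
  set χ : ℝ → ℝ := fun t => max 0 (min 1 (min ((t-u)/u) ((T-d-t)/d))) with hχ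
  have hsub : Function.support χ ⊆ Icc u (T-d) := by
    intro t ht
    simp only [Function.mem_support, hχ] at ht
    by_contra hmem
    apply ht
    rcases lt_or_ge t u with h | h
    · have h1 : (t-u)/u ≤ 0 := div_nonpos_of_nonpos_of_nonneg (by linarith) hu0.le
      have h2 : min 1 (min ((t-u)/u) ((T-d-t)/d)) ≤ 0 :=
        le_trans (le_trans (min_le_right _ _) (min_le_left _ _)) h1
      exact max_eq_left h2
    · have h' : T - d < t := by
        rcases lt_or_ge (T-d) t with h'' | h''
        · exact h''
        · exact absurd ⟨h, h''⟩ hmem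
      have h1 : (T-d-t)/d ≤ 0 := div_nonpos_of_nonpos_of_nonneg (by linarith) hd0.le
      have h2 : min 1 (min ((t-u)/u) ((T-d-t)/d)) ≤ 0 :=
        le_trans (le_trans (min_le_right _ _) (min_le_right _ _)) h1
      exact max_eq_left h2
  have htsub : tsupport χ ⊆ Icc u (T-d) := closure_minimal hsub isClosed_Icc
  refine ⟨χ, by fun_prop, ?_, ?_, ?_, ?_⟩
  · intro t
    exact ⟨le_max_left _ _, max_le zero_le_one (min_le_left _ _)⟩
  · rintro t ⟨h1, h2⟩
    have e1 : (1:ℝ) ≤ (t-u)/u := by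
      rw [le_div_iff₀ hu0]; rw [hu] at *; linarith
    have e2 : (1:ℝ) ≤ (T-d-t)/d := by
      rw [le_div_iff₀ hd0]; rw [hd] at *; linarith
    simp only [hχ]
    rw [min_eq_left (le_min e1 e2), max_eq_right zero_le_one]
  · refine htsub.trans ?_
    rintro x ⟨h1, h2⟩
    exact ⟨lt_of_lt_of_le hu0 h1, lt_of_le_of_lt h2 (by linarith)⟩
  · exact IsCompact.of_isClosed_subset isCompact_Icc (isClosed_tsupport _) htsub

/-- basic duality lower bound for integrals -/
lemma lb_one {ℛ : Type*} [Fintype ℛ] {μ : Measure ℝ} {u κ φ : ℝ → ℛ → ℝ}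
    (hu : ∀ᵐ t ∂μ, ∀ r, 0 ≤ u t r) (hκ : ∀ᵐ t ∂μ, ∀ r, 0 ≤ κ t r)
    (hint : Integrable (fun t => ∑ r, (φ t r * u t r - (Real.exp (φ t r) - 1) * κ t r)) μ) :
    ENNReal.ofReal (∫ t, ∑ r, (φ t r * u t r - (Real.exp (φ t r) - 1) * κ t r) ∂μ)
      ≤ ∫⁻ t, ∑ r, bes (u t r) (κ t r) ∂μ := by
  set f : ℝ → ℝ := fun t => ∑ r, (φ t r * u t r - (Real.exp (φ t r) - 1) * κ t r) with hf
  have h1 : ∫ t, f t ∂μ ≤ ∫ t, max (f t) 0 ∂μ :=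
    integral_mono hint hint.pos_part (fun t => le_max_left _ _)
  have h2 : ENNReal.ofReal (∫ t, max (f t) 0 ∂μ) = ∫⁻ t, ENNReal.ofReal (max (f t) 0) ∂μ :=
    ofReal_integral_eq_lintegral_ofReal hint.pos_part
      (Eventually.of_forall fun t => le_max_right _ _)
  calc ENNReal.ofReal (∫ t, f t ∂μ) ≤ ENNReal.ofReal (∫ t, max (f t) 0 ∂μ) :=
        ENNReal.ofReal_le_ofReal h1
  _ = ∫⁻ t, ENNReal.ofReal (max (f t) 0) ∂μ := h2
  _ ≤ ∫⁻ t, ∑ r, bes (u t r) (κ t r) ∂μ := by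
      apply lintegral_mono_ae
      filter_upwards [hu, hκ] with t hut hκt
      rw [ofReal_max_zero]
      refine le_trans (ofReal_sum_le _ _) ?_
      apply Finset.sum_le_sum
      intro r _
      exact dual_le_bes _ _ _ (hut r) (hκt r)

lemma betaF_measurable (m : ℝ) : Measurable (fun p : ℝ × ℝ => betaF m p.1 p.2) := by
  unfold betaF
  apply Measurable.ite (measurableSet_eq_fun measurable_fst measurable_const) measurable_const
  apply Measurable.ite (measurableSet_eq_fun measurable_snd measurable_const) measurable_const
  exact measurable_const.max (measurable_const.min ((measurable_fst.div measurable_snd).log))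

lemma gF_measurable (m : ℝ) : Measurable (fun p : ℝ × ℝ => gF m p.1 p.2) := by
  unfold gF
  exact ((betaF_measurable m).mul measurable_fst).sub
    ((((betaF_measurable m).exp).sub measurable_const).mul measurable_snd)

lemma term_abs_bound (m b jj kk K : ℝ) (hm : 0 ≤ m) (hb : |b| ≤ m) (hk0 : 0 ≤ kk) (hkK : kk ≤ K) :
    |b*jj - (Real.exp b - 1)*kk| ≤ m*|jj| + (Real.exp m + 1)*K := by
  have h1 : |b*jj| ≤ m*|jj| := by
    rw [abs_mul]
    exact mul_le_mul_of_nonneg_right hb (abs_nonneg _)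
  have h2 : |(Real.exp b - 1)*kk| ≤ (Real.exp m + 1)*K := by
    rw [abs_mul]
    apply mul_le_mul _ _ (abs_nonneg _) (by positivity)
    · rw [abs_le]
      have he := Real.exp_le_exp.mpr (abs_le.mp hb).2
      have he0 := Real.exp_pos b
      constructor <;> nlinarith [Real.exp_pos m]
    · rw [abs_of_nonneg hk0]; exact hkK
  calc |b*jj - (Real.exp b - 1)*kk| ≤ |b*jj| + |(Real.exp b - 1)*kk| := abs_sub _ _
  _ ≤ _ := add_le_add h1 h2

/-- for continuous bounded `k̄`, the rate functional `J` is sequentially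
lower semicontinuous along hybrid convergence: if `W^{1,1}` pairs `(cₙ,wₙ)` (with
values in the nonnegative cones, `ẇₙ ≥ 0`, `ċₙ = Γẇₙ`) converge to `(c,w)` in the
hybrid sense, then `liminf J(cₙ,wₙ) ≥ J(c,w)`. -/
theorem stmt8
    {𝒴 ℛ : Type*} [Fintype 𝒴] [Fintype ℛ]
    (T : ℝ) (hT : 0 < T)
    (γ : ℛ → 𝒴 → ℝ)
    (kbar : (𝒴 → ℝ) → ℛ → ℝ)
    (hk_cont : ContinuousOn kbar {c : 𝒴 → ℝ | ∀ y, 0 ≤ c y})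
    (hk_nonneg : ∀ c : 𝒴 → ℝ, (∀ y, 0 ≤ c y) → ∀ r, 0 ≤ kbar c r)
    (hk_bdd : ∃ K : ℝ, ∀ c : 𝒴 → ℝ, (∀ y, 0 ≤ c y) → ∀ r, kbar c r ≤ K)
    -- the approximating sequence of W^{1,1} pairs with their derivatives
    (cn : ℕ → ℝ → 𝒴 → ℝ) (wn : ℕ → ℝ → ℛ → ℝ)
    (dcn : ℕ → ℝ → 𝒴 → ℝ) (dwn : ℕ → ℝ → ℛ → ℝ)
    (hn : ∀ n : ℕ,
      IntegrableOn (dcn n) (Set.Ioo 0 T) ∧ IntegrableOn (dwn n) (Set.Ioo 0 T)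
      ∧ (∀ t ∈ Set.Icc (0:ℝ) T, cn n t = cn n 0 + ∫ s in (0:ℝ)..t, dcn n s)
      ∧ (∀ t ∈ Set.Icc (0:ℝ) T, wn n t = wn n 0 + ∫ s in (0:ℝ)..t, dwn n s)
      ∧ (∀ t ∈ Set.Icc (0:ℝ) T, (∀ y, 0 ≤ cn n t y) ∧ (∀ r, 0 ≤ wn n t r))
      ∧ (∀ᵐ t ∂(volume.restrict (Set.Ioo (0:ℝ) T)),
          (∀ r, 0 ≤ dwn n t r) ∧ dcn n t = fun y => ∑ r, dwn n t r * γ r y))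
    -- the limit W^{1,1} pair with its derivative
    (c : ℝ → 𝒴 → ℝ) (w : ℝ → ℛ → ℝ) (dc : ℝ → 𝒴 → ℝ) (dw : ℝ → ℛ → ℝ)
    (hlim : IntegrableOn dc (Set.Ioo 0 T) ∧ IntegrableOn dw (Set.Ioo 0 T)
      ∧ (∀ t ∈ Set.Icc (0:ℝ) T, c t = c 0 + ∫ s in (0:ℝ)..t, dc s)
      ∧ (∀ t ∈ Set.Icc (0:ℝ) T, w t = w 0 + ∫ s in (0:ℝ)..t, dw s)
      ∧ (∀ t ∈ Set.Icc (0:ℝ) T, (∀ y, 0 ≤ c t y) ∧ (∀ r, 0 ≤ w t r))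
      ∧ (∀ᵐ t ∂(volume.restrict (Set.Ioo (0:ℝ) T)),
          (∀ r, 0 ≤ dw t r) ∧ dc t = fun y => ∑ r, dw t r * γ r y))
    -- hybrid convergence: L¹ convergence of the paths ...
    (hL1 : Tendsto
      (fun n => ∫ t in Set.Ioo (0:ℝ) T, (‖cn n t - c t‖ + ‖wn n t - w t‖))
      atTop (𝓝 0))
    -- ... and vague convergence of the flux derivatives ...
    (hvague_w : ∀ φ : ℝ → ℛ → ℝ, Continuous φ → HasCompactSupport φ →
      tsupport φ ⊆ Set.Ioo 0 T →
      Tendsto (fun n => ∫ t in Set.Ioo (0:ℝ) T, ∑ r, φ t r * dwn n t r) atTop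
        (𝓝 (∫ t in Set.Ioo (0:ℝ) T, ∑ r, φ t r * dw t r)))
    -- ... and of the concentration derivatives
    (hvague_c : ∀ ξ : ℝ → 𝒴 → ℝ, Continuous ξ → HasCompactSupport ξ →
      tsupport ξ ⊆ Set.Ioo 0 T →
      Tendsto (fun n => ∫ t in Set.Ioo (0:ℝ) T, ∑ y, ξ t y * dcn n t y) atTop
        (𝓝 (∫ t in Set.Ioo (0:ℝ) T, ∑ y, ξ t y * dc t y))) :
    (∫⁻ t in Set.Ioo (0:ℝ) T, ∑ r, bes (dw t r) (kbar (c t) r))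
      ≤ Filter.atTop.liminf
          (fun n => ∫⁻ t in Set.Ioo (0:ℝ) T, ∑ r, bes (dwn n t r) (kbar (cn n t) r)) := by
  classical
  obtain ⟨hdc, hdw, hc_eq, hw_eq, hcw_pos, hae⟩ := hlim
  obtain ⟨K0, hK0⟩ := hk_bdd
  set K : ℝ := max K0 0 with hK
  have hK0' : 0 ≤ K := le_max_right _ _
  have hKb : ∀ z : 𝒴 → ℝ, (∀ y, 0 ≤ z y) → ∀ r, kbar z r ≤ K :=
    fun z hz r => le_trans (hK0 z hz r) (le_max_left _ _)
  set μ : Measure ℝ := volume.restrict (Set.Ioo (0:ℝ) T) with hμ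
  have hIoosub : Set.Ioo (0:ℝ) T ⊆ Set.Icc (0:ℝ) T := Set.Ioo_subset_Icc_self
  have haeIoo : ∀ᵐ t ∂μ, t ∈ Set.Ioo (0:ℝ) T := ae_restrict_mem measurableSet_Ioo
  haveI hfin : IsFiniteMeasure μ := by
    constructor
    rw [hμ, Measure.restrict_apply_univ, Real.volume_Ioo]
    exact ENNReal.ofReal_lt_top
  set L := Filter.atTop.liminf
      (fun n => ∫⁻ t in Set.Ioo (0:ℝ) T, ∑ r, bes (dwn n t r) (kbar (cn n t) r)) with hLdef
  -- continuity of paths on Icc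
  have hprim : ∀ (f : ℝ → 𝒴 → ℝ), IntegrableOn f (Set.Ioo 0 T) →
      ContinuousOn (fun t => ∫ s in (0:ℝ)..t, f s) (Set.Icc 0 T) := by
    intro f hf
    have h1 : IntegrableOn f (Set.uIcc 0 T) := by
      rw [Set.uIcc_of_le hT.le]
      rw [integrableOn_Icc_iff_integrableOn_Ioo]
      exact hf
    have := intervalIntegral.continuousOn_primitive_interval h1
    rwa [Set.uIcc_of_le hT.le] at this
  have hprim' : ∀ (f : ℝ → ℛ → ℝ), IntegrableOn f (Set.Ioo 0 T) →
      ContinuousOn (fun t => ∫ s in (0:ℝ)..t, f s) (Set.Icc 0 T) := by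
    intro f hf
    have h1 : IntegrableOn f (Set.uIcc 0 T) := by
      rw [Set.uIcc_of_le hT.le]
      rw [integrableOn_Icc_iff_integrableOn_Ioo]
      exact hf
    have := intervalIntegral.continuousOn_primitive_interval h1
    rwa [Set.uIcc_of_le hT.le] at this
  have hcn_cont : ∀ n, ContinuousOn (cn n) (Set.Icc 0 T) := by
    intro n
    apply ContinuousOn.congr (continuousOn_const.add (hprim _ (hn n).1))
    intro t ht
    exact (hn n).2.2.1 t ht
  have hc_cont : ContinuousOn c (Set.Icc 0 T) := by
    apply ContinuousOn.congr (continuousOn_const.add (hprim _ hdc))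
    intro t ht
    exact hc_eq t ht
  have hwn_cont : ∀ n, ContinuousOn (wn n) (Set.Icc 0 T) := by
    intro n
    apply ContinuousOn.congr (continuousOn_const.add (hprim' _ (hn n).2.1))
    intro t ht
    exact (hn n).2.2.2.1 t ht
  have hw_cont : ContinuousOn w (Set.Icc 0 T) := by
    apply ContinuousOn.congr (continuousOn_const.add (hprim' _ hdw))
    intro t ht
    exact hw_eq t ht
  -- kbar ∘ cn measurable & bounds
  have hkcn_cont : ∀ n, ContinuousOn (fun t => kbar (cn n t)) (Set.Icc 0 T) := by
    intro n
    exact ContinuousOn.comp hk_cont (hcn_cont n) (fun t ht => ((hn n).2.2.2.2.1 t ht).1)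
  have hkc_cont : ContinuousOn (fun t => kbar (c t)) (Set.Icc 0 T) :=
    ContinuousOn.comp hk_cont hc_cont (fun t ht => (hcw_pos t ht).1)
  have hkcn_meas : ∀ n, AEStronglyMeasurable (fun t => kbar (cn n t)) μ := by
    intro n
    exact ((hkcn_cont n).mono hIoosub).aestronglyMeasurable measurableSet_Ioo
  have hkc_meas : AEStronglyMeasurable (fun t => kbar (c t)) μ :=
    (hkc_cont.mono hIoosub).aestronglyMeasurable measurableSet_Ioo
  -- component integrability of dwn, dw
  have hdwn_r : ∀ n r, Integrable (fun t => dwn n t r) μ := by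
    intro n r
    exact (ContinuousLinearMap.proj (R := ℝ) (φ := fun _ : ℛ => ℝ) r).integrable_comp (hn n).2.1
  have hdw_r : ∀ r, Integrable (fun t => dw t r) μ := by
    intro r
    exact (ContinuousLinearMap.proj (R := ℝ) (φ := fun _ : ℛ => ℝ) r).integrable_comp hdw
  -- STEP A
  have stepA : ∀ (B : ℝ) (φ : ℝ → ℛ → ℝ), 0 ≤ B → Continuous φ → HasCompactSupport φ →
      tsupport φ ⊆ Set.Ioo 0 T → (∀ t r, |φ t r| ≤ B) →
      ENNReal.ofReal (∫ t, (∑ r, (φ t r * dw t r - (Real.exp (φ t r) - 1) * kbar (c t) r)) ∂μ)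
        ≤ L := by
    intro B φ hB0 hφc hφcs hφsupp hφB
    -- integrability pieces
    have hφr_cont : ∀ r, Continuous (fun t => φ t r) := fun r => (continuous_apply r).comp hφc
    have hint1 : ∀ (u : ℝ → ℛ → ℝ), (∀ r, Integrable (fun t => u t r) μ) →
        Integrable (fun t => ∑ r, φ t r * u t r) μ := by
      intro u hu
      apply integrable_finset_sum
      intro r _
      exact Integrable.bdd_mul (c := B) (hu r) (hφr_cont r).aestronglyMeasurable
        (Eventually.of_forall fun t => by simpa [Real.norm_eq_abs] using hφB t r)
    have hint2 : ∀ (κ : ℝ → ℝ → ℝ), True → True := fun _ _ => trivial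
    have hint2n : ∀ n, Integrable (fun t => ∑ r, (Real.exp (φ t r) - 1) * kbar (cn n t) r) μ := by
      intro n
      apply integrable_finset_sum
      intro r _
      apply Integrable.mono' (integrable_const ((Real.exp B + 1) * K))
      · exact ((hφr_cont r).rexp.sub continuous_const).aestronglyMeasurable.mul
          ((continuous_apply r).comp_aestronglyMeasurable (hkcn_meas n))
      · filter_upwards [haeIoo] with t ht
        have hk1 : 0 ≤ kbar (cn n t) r := ((hn n).2.2.2.2.1 t (hIoosub ht)).1 |>
          (fun h => hk_nonneg _ h r)
        have hk2 : kbar (cn n t) r ≤ K := hKb _ ((hn n).2.2.2.2.1 t (hIoosub ht)).1 r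
        have he : Real.exp (φ t r) ≤ Real.exp B := Real.exp_le_exp.mpr ((abs_le.mp (hφB t r)).2)
        have he0 : 0 < Real.exp (φ t r) := Real.exp_pos _
        rw [Real.norm_eq_abs, abs_mul]
        apply mul_le_mul _ _ (abs_nonneg _) (by positivity)
        · rw [abs_le]; constructor <;> nlinarith [Real.exp_pos B]
        · rw [abs_of_nonneg hk1]; exact hk2
    have hint2l : Integrable (fun t => ∑ r, (Real.exp (φ t r) - 1) * kbar (c t) r) μ := by
      apply integrable_finset_sum
      intro r _
      apply Integrable.mono' (integrable_const ((Real.exp B + 1) * K))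
      · exact ((hφr_cont r).rexp.sub continuous_const).aestronglyMeasurable.mul
          ((continuous_apply r).comp_aestronglyMeasurable hkc_meas)
      · filter_upwards [haeIoo] with t ht
        have hk1 : 0 ≤ kbar (c t) r := hk_nonneg _ (hcw_pos t (hIoosub ht)).1 r
        have hk2 : kbar (c t) r ≤ K := hKb _ (hcw_pos t (hIoosub ht)).1 r
        have he : Real.exp (φ t r) ≤ Real.exp B := Real.exp_le_exp.mpr ((abs_le.mp (hφB t r)).2)
        have he0 : 0 < Real.exp (φ t r) := Real.exp_pos _
        rw [Real.norm_eq_abs, abs_mul]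
        apply mul_le_mul _ _ (abs_nonneg _) (by positivity)
        · rw [abs_le]; constructor <;> nlinarith [Real.exp_pos B]
        · rw [abs_of_nonneg hk1]; exact hk2
    have hFn_int : ∀ n, Integrable
        (fun t => ∑ r, (φ t r * dwn n t r - (Real.exp (φ t r) - 1) * kbar (cn n t) r)) μ := by
      intro n
      have := (hint1 (dwn n) (hdwn_r n)).sub (hint2n n)
      simpa [Finset.sum_sub_distrib, Pi.sub_def] using this
    have hF_int : Integrable
        (fun t => ∑ r, (φ t r * dw t r - (Real.exp (φ t r) - 1) * kbar (c t) r)) μ := by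
      have := (hint1 dw hdw_r).sub hint2l
      simpa [Finset.sum_sub_distrib, Pi.sub_def] using this
    -- lower bound for each n
    have h1 : ∀ n, ENNReal.ofReal
        (∫ t, (∑ r, (φ t r * dwn n t r - (Real.exp (φ t r) - 1) * kbar (cn n t) r)) ∂μ)
        ≤ ∫⁻ t in Set.Ioo (0:ℝ) T, ∑ r, bes (dwn n t r) (kbar (cn n t) r) := by
      intro n
      apply lb_one
      · exact ((hn n).2.2.2.2.2).mono fun t h => h.1
      · filter_upwards [haeIoo] with t ht
        exact fun r => hk_nonneg _ ((hn n).2.2.2.2.1 t (hIoosub ht)).1 r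
      · exact hFn_int n
    -- convergence of the kbar ∘ cn integrals
    have hCn : Tendsto (fun n => ∫ t, (∑ r, (Real.exp (φ t r) - 1) * kbar (cn n t) r) ∂μ)
        atTop (𝓝 (∫ t, (∑ r, (Real.exp (φ t r) - 1) * kbar (c t) r) ∂μ)) := by
      -- L¹ convergence of cn towards c, then subsequence + dominated convergence
      have hnormc_int : ∀ n, Integrable (fun t => ‖cn n t - c t‖) μ := by
        intro n
        exact ((((hcn_cont n).sub hc_cont).norm).integrableOn_Icc).mono_set hIoosub
      have hnormw_int : ∀ n, Integrable (fun t => ‖wn n t - w t‖) μ := by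
        intro n
        exact ((((hwn_cont n).sub hw_cont).norm).integrableOn_Icc).mono_set hIoosub
      have hcl1 : Tendsto (fun n => ∫ t, ‖cn n t - c t‖ ∂μ) atTop (𝓝 0) := by
        apply tendsto_of_tendsto_of_tendsto_of_le_of_le tendsto_const_nhds hL1
        · intro n
          exact integral_nonneg fun t => norm_nonneg _
        · intro n
          apply integral_mono (hnormc_int n) ((hnormc_int n).add (hnormw_int n))
          intro t
          simp only [Pi.add_apply]
          nlinarith [norm_nonneg (wn n t - w t)]
      have hmeas_cn : ∀ n, AEStronglyMeasurable (cn n) μ := fun n =>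
        ((hcn_cont n).mono hIoosub).aestronglyMeasurable measurableSet_Ioo
      have hmeas_c : AEStronglyMeasurable c μ :=
        (hc_cont.mono hIoosub).aestronglyMeasurable measurableSet_Ioo
      have hel : Tendsto (fun n => eLpNorm (cn n - c) 1 μ) atTop (𝓝 0) := by
        have heq : ∀ n, eLpNorm (cn n - c) 1 μ = ENNReal.ofReal (∫ t, ‖cn n t - c t‖ ∂μ) := by
          intro n
          rw [eLpNorm_one_eq_lintegral_enorm,
            ofReal_integral_eq_lintegral_ofReal (hnormc_int n)
              (Eventually.of_forall fun t => norm_nonneg _)]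
          exact lintegral_congr fun t => (ofReal_norm _).symm
        simp_rw [heq]
        have := ENNReal.tendsto_ofReal hcl1
        simpa using this
      have hinm : TendstoInMeasure μ cn atTop c :=
        tendstoInMeasure_of_tendsto_eLpNorm one_ne_zero hmeas_cn hmeas_c hel
      apply tendsto_of_subseq_tendsto
      intro ns hns
      have hsub : TendstoInMeasure μ (fun i => cn (ns i)) atTop c := fun ε hε =>
        (hinm ε hε).comp hns
      obtain ⟨ms, _, hms_ae⟩ := hsub.exists_seq_tendsto_ae
      refine ⟨ms, ?_⟩
      apply tendsto_integral_of_dominated_convergence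
        (bound := fun _ => (Fintype.card ℛ : ℝ) * ((Real.exp B + 1) * K))
        (fun i => (hint2n (ns (ms i))).aestronglyMeasurable)
        (integrable_const _)
      · intro i
        filter_upwards [haeIoo] with t ht
        refine le_trans (norm_sum_le _ _) ?_
        have hb : ∀ r : ℛ, ‖(Real.exp (φ t r) - 1) * kbar (cn (ns (ms i)) t) r‖
            ≤ (Real.exp B + 1) * K := by
          intro r
          have hk1 : 0 ≤ kbar (cn (ns (ms i)) t) r :=
            hk_nonneg _ ((hn _).2.2.2.2.1 t (hIoosub ht)).1 r
          have hk2 : kbar (cn (ns (ms i)) t) r ≤ K :=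
            hKb _ ((hn _).2.2.2.2.1 t (hIoosub ht)).1 r
          have he : Real.exp (φ t r) ≤ Real.exp B := Real.exp_le_exp.mpr ((abs_le.mp (hφB t r)).2)
          have he0 : 0 < Real.exp (φ t r) := Real.exp_pos _
          rw [Real.norm_eq_abs, abs_mul]
          apply mul_le_mul _ _ (abs_nonneg _) (by positivity)
          · rw [abs_le]; constructor <;> nlinarith [Real.exp_pos B]
          · rw [abs_of_nonneg hk1]; exact hk2
        calc (∑ r, ‖(Real.exp (φ t r) - 1) * kbar (cn (ns (ms i)) t) r‖)
            ≤ ∑ _r : ℛ, (Real.exp B + 1) * K := Finset.sum_le_sum fun r _ => hb r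
        _ = (Fintype.card ℛ : ℝ) * ((Real.exp B + 1) * K) := by
            rw [Finset.sum_const, nsmul_eq_mul]; rfl
      · filter_upwards [hms_ae, haeIoo] with t hct ht
        apply tendsto_finset_sum
        intro r _
        apply Tendsto.const_mul
        have hmem : c t ∈ {z : 𝒴 → ℝ | ∀ y, 0 ≤ z y} := (hcw_pos t (hIoosub ht)).1
        have h1 : Tendsto (fun i => cn (ns (ms i)) t) atTop
            (𝓝[{z : 𝒴 → ℝ | ∀ y, 0 ≤ z y}] (c t)) := by
          rw [tendsto_nhdsWithin_iff]
          exact ⟨hct, Eventually.of_forall fun i => ((hn _).2.2.2.2.1 t (hIoosub ht)).1⟩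
        have h2 : Tendsto (fun i => kbar (cn (ns (ms i)) t)) atTop (𝓝 (kbar (c t))) :=
          ((hk_cont (c t) hmem).tendsto).comp h1
        exact ((continuous_apply r).tendsto _).comp h2
    have hBn := hvague_w φ hφc hφcs hφsupp
    have htend : Tendsto
        (fun n => ∫ t, (∑ r, (φ t r * dwn n t r - (Real.exp (φ t r) - 1) * kbar (cn n t) r)) ∂μ)
        atTop
        (𝓝 (∫ t, (∑ r, (φ t r * dw t r - (Real.exp (φ t r) - 1) * kbar (c t) r)) ∂μ)) := by
      have e1 : ∀ n, (∫ t, (∑ r, (φ t r * dwn n t r - (Real.exp (φ t r) - 1) * kbar (cn n t) r)) ∂μ)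
          = (∫ t, (∑ r, φ t r * dwn n t r) ∂μ) - ∫ t, (∑ r, (Real.exp (φ t r) - 1) * kbar (cn n t) r) ∂μ := by
        intro n
        rw [← integral_sub (hint1 (dwn n) (hdwn_r n)) (hint2n n)]
        congr 1
        funext t
        rw [Finset.sum_sub_distrib]
      have e2 : (∫ t, (∑ r, (φ t r * dw t r - (Real.exp (φ t r) - 1) * kbar (c t) r)) ∂μ)
          = (∫ t, (∑ r, φ t r * dw t r) ∂μ) - ∫ t, (∑ r, (Real.exp (φ t r) - 1) * kbar (c t) r) ∂μ := by
        rw [← integral_sub (hint1 dw hdw_r) hint2l]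
        congr 1
        funext t
        rw [Finset.sum_sub_distrib]
      rw [e2]
      simp_rw [e1]
      exact hBn.sub hCn
    have hlimeq : ENNReal.ofReal
        (∫ t, (∑ r, (φ t r * dw t r - (Real.exp (φ t r) - 1) * kbar (c t) r)) ∂μ)
        = Filter.atTop.liminf (fun n => ENNReal.ofReal
          (∫ t, (∑ r, (φ t r * dwn n t r - (Real.exp (φ t r) - 1) * kbar (cn n t) r)) ∂μ)) :=
      (((ENNReal.continuous_ofReal.tendsto _).comp htend).liminf_eq).symm
    rw [hlimeq, hLdef]
    exact liminf_le_liminf (Eventually.of_forall h1)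
  -- ====================  STEP B  ====================
  -- measurable version of dw
  have hdw_meas : AEStronglyMeasurable dw μ := hdw.aestronglyMeasurable
  set v : ℝ → ℛ → ℝ := hdw_meas.mk dw with hvdef
  have hv_meas : StronglyMeasurable v := hdw_meas.stronglyMeasurable_mk
  have hv_ae : dw =ᵐ[μ] v := hdw_meas.ae_eq_mk
  have hv_r_meas : ∀ r, Measurable (fun t => v t r) := fun r =>
    (measurable_pi_apply r).comp hv_meas.measurable
  have hv_int : Integrable v μ := hdw.congr hv_ae
  have hv_r_int : ∀ r, Integrable (fun t => v t r) μ := fun r =>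
    (ContinuousLinearMap.proj (R := ℝ) (φ := fun _ : ℛ => ℝ) r).integrable_comp hv_int
  have hv_nonneg : ∀ᵐ t ∂μ, ∀ r, 0 ≤ v t r := by
    filter_upwards [hae, hv_ae] with t h1 h2
    rw [← h2]; exact h1.1
  -- globally continuous version of kbar ∘ c
  set θ : ℝ → ℝ := fun t => min T (max 0 t) with hθdef
  have hθ_cont : Continuous θ := continuous_const.min (continuous_const.max continuous_id)
  have hθ_mem : ∀ t, θ t ∈ Set.Icc (0:ℝ) T := fun t =>
    ⟨le_min hT.le (le_max_left 0 t), min_le_left _ _⟩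
  have hθ_id : ∀ t ∈ Set.Icc (0:ℝ) T, θ t = t := by
    intro t ht
    simp only [hθdef]
    rw [max_eq_right ht.1, min_eq_right ht.2]
  set cC : ℝ → 𝒴 → ℝ := fun t => c 0 + ∫ s in (0:ℝ)..(θ t), dc s with hcCdef
  have hcC_cont : Continuous cC :=
    (continuousOn_const.add (hprim _ hdc)).comp_continuous hθ_cont hθ_mem
  have hcC_eqc : ∀ t ∈ Set.Icc (0:ℝ) T, cC t = c t := by
    intro t ht
    simp only [hcCdef]
    rw [hθ_id t ht]
    exact (hc_eq t ht).symm
  have hcC_cone : ∀ t y, 0 ≤ cC t y := by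
    intro t y
    have h1 : cC t = cC (θ t) := by
      simp only [hcCdef]
      rw [hθ_id (θ t) (hθ_mem t)]
    rw [h1, hcC_eqc (θ t) (hθ_mem t)]
    exact (hcw_pos (θ t) (hθ_mem t)).1 y
  set k : ℝ → ℛ → ℝ := fun t => kbar (cC t) with hkdef
  have hk_cont2 : Continuous k := hk_cont.comp_continuous hcC_cont (fun t => hcC_cone t)
  have hk_r_cont : ∀ r, Continuous (fun t => k t r) := fun r => (continuous_apply r).comp hk_cont2
  have hk_nn : ∀ t r, 0 ≤ k t r := fun t r => hk_nonneg _ (hcC_cone t) r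
  have hk_le : ∀ t r, k t r ≤ K := fun t r => hKb _ (hcC_cone t) r
  have hk_eqc : ∀ t ∈ Set.Icc (0:ℝ) T, k t = kbar (c t) := by
    intro t ht
    simp only [hkdef]
    rw [hcC_eqc t ht]
  -- definitions
  set I : ℕ → Set ℝ := fun m => Set.Icc (T/(m+2)) (T - T/(m+2)) with hIdef
  set β : ℕ → ℝ → ℛ → ℝ :=
    fun m t r => if t ∈ I m then betaF m (v t r) (k t r) else 0 with hβdef
  set f : ℕ → ℝ → ℝ :=
    fun m t => ∑ r, (β m t r * v t r - (Real.exp (β m t r) - 1) * k t r) with hfdef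
  have hf_eq : ∀ m t, f m t = if t ∈ I m then ∑ r, gF m (v t r) (k t r) else 0 := by
    intro m t
    by_cases ht : t ∈ I m
    · rw [if_pos ht]
      simp only [hfdef, hβdef, if_pos ht, gF]
    · rw [if_neg ht]
      simp only [hfdef, hβdef, if_neg ht]
      simp [Real.exp_zero]
  have hImono : ∀ m m' : ℕ, m ≤ m' → I m ⊆ I m' := by
    intro m m' h
    have h2 : T/((m':ℝ)+2) ≤ T/((m:ℝ)+2) := by
      rw [div_le_div_iff₀ (by positivity) (by positivity)]
      have hc : (m:ℝ) ≤ (m':ℝ) := Nat.cast_le.mpr h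
      nlinarith
    exact Set.Icc_subset_Icc h2 (by linarith)
  have hβ_bdd : ∀ m t r, |β m t r| ≤ (m:ℝ) := by
    intro m t r
    simp only [hβdef]
    split_ifs with h
    · have := betaF_mem (m:ℝ) (v t r) (k t r) (Nat.cast_nonneg m)
      rw [abs_le]; exact this
    · rw [abs_zero]; exact Nat.cast_nonneg m
  -- rewrite the goal
  have hgoal1 : (∫⁻ t in Set.Ioo (0:ℝ) T, ∑ r, bes (dw t r) (kbar (c t) r))
      = ∫⁻ t, (∑ r, bes (v t r) (k t r)) ∂μ := by
    apply lintegral_congr_ae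
    filter_upwards [hv_ae, haeIoo] with t h1 h2
    have e1 : kbar (c t) = k t := (hk_eqc t (hIoosub h2)).symm
    rw [e1, h1]
  rw [hgoal1]
  -- monotonicity a.e.
  have hmono_ae : ∀ᵐ t ∂μ, Monotone (fun m : ℕ => ENNReal.ofReal (f m t)) := by
    filter_upwards [hv_nonneg] with t hvt
    intro m m' hmm
    apply ENNReal.ofReal_le_ofReal
    rw [hf_eq, hf_eq]
    by_cases h1 : t ∈ I m
    · rw [if_pos h1, if_pos (hImono m m' hmm h1)]
      exact Finset.sum_le_sum fun r _ => gF_mono _ _ _ _ (Nat.cast_nonneg m)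
        (by exact_mod_cast hmm) (hvt r) (hk_nn t r)
    · rw [if_neg h1]
      split_ifs with h2
      · exact Finset.sum_nonneg fun r _ => gF_nonneg _ _ _ (Nat.cast_nonneg m') (hvt r) (hk_nn t r)
      · exact le_refl _
  have hsup_ae : ∀ᵐ t ∂μ, (∑ r, bes (v t r) (k t r)) = ⨆ m : ℕ, ENNReal.ofReal (f m t) := by
    filter_upwards [hv_nonneg, haeIoo, hmono_ae] with t hvt ht hmono
    have hev : ∀ᶠ m : ℕ in atTop, t ∈ I m := by
      have hT2 : Tendsto (fun m : ℕ => T/((m:ℝ)+2)) atTop (𝓝 0) := by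
        have h0 := (tendsto_const_div_atTop_nhds_zero_nat T).comp (tendsto_add_atTop_nat 2)
        exact h0.congr (fun m => by simp only [Function.comp]; push_cast; ring)
      have hpos : (0:ℝ) < min t (T - t) := lt_min ht.1 (by linarith [ht.2])
      filter_upwards [hT2.eventually_lt_const hpos] with m hm
      constructor
      · exact le_of_lt (lt_of_lt_of_le hm (min_le_left _ _))
      · have := lt_of_lt_of_le hm (min_le_right _ _)
        linarith
    have htend : Tendsto (fun m : ℕ => ENNReal.ofReal (f m t)) atTop
        (𝓝 (∑ r, bes (v t r) (k t r))) := by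
      apply Tendsto.congr' (f₁ := fun m : ℕ => ∑ r, ENNReal.ofReal (gF m (v t r) (k t r)))
      · filter_upwards [hev] with m hm
        rw [hf_eq, if_pos hm]
        rw [ENNReal.ofReal_sum_of_nonneg fun r _ =>
          gF_nonneg _ _ _ (Nat.cast_nonneg m) (hvt r) (hk_nn t r)]
      · exact tendsto_finset_sum _ fun r _ => gF_tendsto _ _ (hvt r) (hk_nn t r)
    exact (tendsto_nhds_unique (tendsto_atTop_iSup hmono) htend).symm
  rw [lintegral_congr_ae hsup_ae]
  have hf_meas : ∀ m : ℕ, Measurable (f m) := by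
    intro m
    have heq : (f m) = fun t => if t ∈ I m then ∑ r, gF m (v t r) (k t r) else 0 := funext (hf_eq m)
    rw [heq]
    apply Measurable.ite measurableSet_Icc _ measurable_const
    apply Finset.measurable_sum
    intro r _
    exact (gF_measurable m).comp ((hv_r_meas r).prodMk (hk_r_cont r).measurable)
  have hq_meas : ∀ m : ℕ, Measurable (fun t => ENNReal.ofReal (f m t)) := fun m =>
    ENNReal.measurable_ofReal.comp (hf_meas m)
  rw [lintegral_iSup' (fun m => (hq_meas m).aemeasurable) hmono_ae]
  apply iSup_le
  intro m
  -- ====================  STEP B : fixed m  ====================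
  -- bound & integrability of integrands
  have hterm_bd : ∀ (ψ : ℝ → ℛ → ℝ), (∀ t r, |ψ t r| ≤ (m:ℝ)) →
      ∀ t, |∑ r, (ψ t r * v t r - (Real.exp (ψ t r) - 1) * k t r)|
        ≤ (∑ r, (m:ℝ) * |v t r|) + (Fintype.card ℛ : ℝ) * ((Real.exp m + 1) * K) := by
    intro ψ hψ t
    refine le_trans (Finset.abs_sum_le_sum_abs _ _) ?_
    have hb : ∀ r : ℛ, |ψ t r * v t r - (Real.exp (ψ t r) - 1) * k t r|
        ≤ (m:ℝ) * |v t r| + (Real.exp m + 1) * K := fun r =>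
      term_abs_bound _ _ _ _ _ (Nat.cast_nonneg m) (hψ t r) (hk_nn t r) (hk_le t r)
    calc (∑ r, |ψ t r * v t r - (Real.exp (ψ t r) - 1) * k t r|)
        ≤ ∑ r, ((m:ℝ)*|v t r| + (Real.exp m + 1)*K) := Finset.sum_le_sum fun r _ => hb r
    _ = (∑ r, (m:ℝ) * |v t r|) + (Fintype.card ℛ : ℝ) * ((Real.exp m + 1) * K) := by
        rw [Finset.sum_add_distrib, Finset.sum_const, nsmul_eq_mul]; rfl
  have hbound_int : Integrable
      (fun t => (∑ r, (m:ℝ) * |v t r|) + (Fintype.card ℛ:ℝ) * ((Real.exp m + 1)*K)) μ :=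
    (integrable_finset_sum _ fun r _ => ((hv_r_int r).abs.const_mul _)).add (integrable_const _)
  have hfm_int : Integrable (f m) μ := by
    apply Integrable.mono' hbound_int (hf_meas m).aestronglyMeasurable
    apply Eventually.of_forall
    intro t
    rw [Real.norm_eq_abs]
    exact hterm_bd (β m) (hβ_bdd m) t
  have hfm_nonneg : 0 ≤ᵐ[μ] f m := by
    filter_upwards [hv_nonneg] with t hvt
    rw [Pi.zero_apply, hf_eq]
    split_ifs with h
    · exact Finset.sum_nonneg fun r _ => gF_nonneg _ _ _ (Nat.cast_nonneg m) (hvt r) (hk_nn t r)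
    · exact le_refl _
  rw [← ofReal_integral_eq_lintegral_ofReal hfm_int hfm_nonneg]
  -- ε-approximation
  apply ENNReal.le_of_forall_pos_le_add
  intro ε hε _
  have hεr : (0:ℝ) < (ε:ℝ) := hε
  -- weighted measure
  set W : ℝ → ℝ := fun t => (∑ r, |v t r|) + ((Fintype.card ℛ:ℝ) * (Real.exp m * K) + 1) with hWdef
  have hW_meas : Measurable W :=
    (Finset.measurable_sum _ fun r _ => (hv_r_meas r).abs).add measurable_const
  have hW_int : Integrable W μ :=
    (integrable_finset_sum _ fun r _ => (hv_r_int r).abs).add (integrable_const _)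
  have hW_nn : ∀ t, 0 ≤ W t := by
    intro t
    have h1 : 0 ≤ ∑ r, |v t r| := Finset.sum_nonneg fun r _ => abs_nonneg _
    have h2 : (0:ℝ) ≤ (Fintype.card ℛ:ℝ) * (Real.exp m * K) := by positivity
    simp only [hWdef]; linarith
  set μ' : Measure ℝ := μ.withDensity (fun t => ENNReal.ofReal (W t)) with hμ'def
  haveI hfin' : IsFiniteMeasure μ' := by
    apply isFiniteMeasure_withDensity
    rw [← ofReal_integral_eq_lintegral_ofReal hW_int (Eventually.of_forall hW_nn)]
    exact ENNReal.ofReal_ne_top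
  have hβm_meas : Measurable (β m) := by
    apply measurable_pi_lambda
    intro r
    apply Measurable.ite measurableSet_Icc _ measurable_const
    exact (betaF_measurable m).comp ((hv_r_meas r).prodMk (hk_r_cont r).measurable)
  have hβ_norm : ∀ t, ‖β m t‖ ≤ (m:ℝ) := fun t =>
    (pi_norm_le_iff_of_nonneg (Nat.cast_nonneg m)).mpr
      (fun r => by rw [Real.norm_eq_abs]; exact hβ_bdd m t r)
  have hβ_mem : MemLp (β m) 1 μ' :=
    MemLp.of_bound hβm_meas.aestronglyMeasurable (m:ℝ) (Eventually.of_forall hβ_norm)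
  obtain ⟨g, hg_cs, hg_close, hg_cont, -⟩ :=
    hβ_mem.exists_hasCompactSupport_eLpNorm_sub_le ENNReal.one_ne_top
      (ε := ENNReal.ofReal (ε:ℝ)) (ne_of_gt (ENNReal.ofReal_pos.mpr hεr))
  have haT : (0:ℝ) < T/(m+2) := by positivity
  obtain ⟨χ, hχ_cont, hχ01, hχ1, hχ_supp, hχ_cs⟩ :=
    exists_cutoff (T/(m+2)) (T - T/(m+2)) T haT (by linarith)
  set ψ : ℝ → ℛ → ℝ := fun t r => χ t * (max (-(m:ℝ)) (min (m:ℝ) (g t r))) with hψdef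
  have hψ_cont : Continuous ψ := continuous_pi fun r =>
    hχ_cont.mul (continuous_const.max (continuous_const.min ((continuous_apply r).comp hg_cont)))
  have hψsupp0 : Function.support ψ ⊆ Function.support χ := by
    intro t ht
    simp only [Function.mem_support] at ht ⊢
    intro h0
    apply ht
    funext r
    simp only [hψdef, h0, zero_mul, Pi.zero_apply]
  have hψ_tsupp : tsupport ψ ⊆ tsupport χ := closure_mono hψsupp0
  have hψ_supp : tsupport ψ ⊆ Set.Ioo 0 T := hψ_tsupp.trans hχ_supp
  have hψ_cs : HasCompactSupport ψ :=
    IsCompact.of_isClosed_subset hχ_cs (isClosed_tsupport ψ) hψ_tsupp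
  have hclamp_abs : ∀ x : ℝ, |max (-(m:ℝ)) (min (m:ℝ) x)| ≤ (m:ℝ) := by
    intro x
    rw [abs_le]
    constructor
    · exact le_max_left _ _
    · refine max_le ?_ (min_le_left _ _)
      have := Nat.cast_nonneg (α := ℝ) m
      linarith
  have hψ_bdd : ∀ t r, |ψ t r| ≤ (m:ℝ) := by
    intro t r
    simp only [hψdef]
    rw [abs_mul]
    calc |χ t| * |max (-(m:ℝ)) (min (m:ℝ) (g t r))| ≤ 1 * (m:ℝ) := by
          apply mul_le_mul _ (hclamp_abs _) (abs_nonneg _) zero_le_one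
          rw [abs_le]
          exact ⟨by linarith [(hχ01 t).1], (hχ01 t).2⟩
    _ = (m:ℝ) := one_mul _
  -- pointwise comparison with the approximant g
  have hclamp_lip : ∀ x y : ℝ, |max (-(m:ℝ)) (min (m:ℝ) x) - max (-(m:ℝ)) (min (m:ℝ) y)|
      ≤ |x - y| := by
    intro x y
    calc |max (-(m:ℝ)) (min (m:ℝ) x) - max (-(m:ℝ)) (min (m:ℝ) y)|
        = |max (min (m:ℝ) x) (-(m:ℝ)) - max (min (m:ℝ) y) (-(m:ℝ))| := by
          rw [max_comm (-(m:ℝ)) (min (m:ℝ) x), max_comm (-(m:ℝ)) (min (m:ℝ) y)]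
    _ ≤ |min (m:ℝ) x - min (m:ℝ) y| := abs_max_sub_max_le_abs _ _ _
    _ ≤ max |(m:ℝ) - (m:ℝ)| |x - y| := abs_min_sub_min_le_max _ _ _ _
    _ = |x - y| := by rw [sub_self, abs_zero]; exact max_eq_right (abs_nonneg _)
  have happrox : ∀ t r, |ψ t r - β m t r| ≤ |g t r - β m t r| := by
    intro t r
    by_cases ht : t ∈ I m
    · have hχt : χ t = 1 := hχ1 t ht
      have hβval : β m t r = betaF m (v t r) (k t r) := if_pos ht
      have hmem := betaF_mem (m:ℝ) (v t r) (k t r) (Nat.cast_nonneg m)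
      rw [← hβval] at hmem
      have hβclamp : max (-(m:ℝ)) (min (m:ℝ) (β m t r)) = β m t r := by
        rw [min_eq_right hmem.2, max_eq_right hmem.1]
      have hψval : ψ t r = max (-(m:ℝ)) (min (m:ℝ) (g t r)) := by
        simp only [hψdef, hχt, one_mul]
      rw [hψval]
      calc |max (-(m:ℝ)) (min (m:ℝ) (g t r)) - β m t r|
          = |max (-(m:ℝ)) (min (m:ℝ) (g t r)) - max (-(m:ℝ)) (min (m:ℝ) (β m t r))| := by
            rw [hβclamp]
      _ ≤ |g t r - β m t r| := hclamp_lip _ _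
    · have hβ0 : β m t r = (0:ℝ) := if_neg ht
      rw [hβ0, sub_zero, sub_zero]
      have hc0 : max (-(m:ℝ)) (min (m:ℝ) (0:ℝ)) = 0 := by
        rw [min_eq_right (Nat.cast_nonneg m), max_eq_right (neg_nonpos.mpr (Nat.cast_nonneg m))]
      have h1 : |ψ t r| ≤ |max (-(m:ℝ)) (min (m:ℝ) (g t r))| := by
        simp only [hψdef]
        rw [abs_mul]
        calc |χ t| * |max (-(m:ℝ)) (min (m:ℝ) (g t r))|
            ≤ 1 * |max (-(m:ℝ)) (min (m:ℝ) (g t r))| := by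
              apply mul_le_mul_of_nonneg_right _ (abs_nonneg _)
              rw [abs_le]
              exact ⟨by linarith [(hχ01 t).1], (hχ01 t).2⟩
        _ = _ := one_mul _
      have h2 : |max (-(m:ℝ)) (min (m:ℝ) (g t r))| ≤ |g t r| := by
        calc |max (-(m:ℝ)) (min (m:ℝ) (g t r))|
            = |max (-(m:ℝ)) (min (m:ℝ) (g t r)) - max (-(m:ℝ)) (min (m:ℝ) (0:ℝ))| := by
              rw [hc0, sub_zero]
        _ ≤ |g t r - 0| := hclamp_lip _ _
        _ = |g t r| := by rw [sub_zero]
      linarith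
  -- target integrand with ψ
  set Fψ : ℝ → ℝ := fun t => ∑ r, (ψ t r * v t r - (Real.exp (ψ t r) - 1) * k t r) with hFψdef
  have hFψ_meas : Measurable Fψ := by
    apply Finset.measurable_sum
    intro r _
    exact ((((continuous_apply r).comp hψ_cont).measurable).mul (hv_r_meas r)).sub
      (((((continuous_apply r).comp hψ_cont).rexp).measurable.sub measurable_const).mul
        (hk_r_cont r).measurable)
  have hFψ_int : Integrable Fψ μ := by
    apply Integrable.mono' hbound_int hFψ_meas.aestronglyMeasurable
    apply Eventually.of_forall
    intro t
    rw [Real.norm_eq_abs]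
    exact hterm_bd ψ hψ_bdd t
  -- pointwise error estimate
  have hdiff : ∀ t, |f m t - Fψ t| ≤ ‖β m t - g t‖ * W t := by
    intro t
    have e0 : f m t - Fψ t = ∑ r, ((β m t r - ψ t r) * v t r
        - (Real.exp (β m t r) - Real.exp (ψ t r)) * k t r) := by
      simp only [hfdef, hFψdef]
      rw [← Finset.sum_sub_distrib]
      apply Finset.sum_congr rfl
      intro r _
      ring
    rw [e0]
    refine le_trans (Finset.abs_sum_le_sum_abs _ _) ?_
    have hr : ∀ r : ℛ, |(β m t r - ψ t r) * v t r
        - (Real.exp (β m t r) - Real.exp (ψ t r)) * k t r|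
        ≤ ‖β m t - g t‖ * (|v t r| + Real.exp m * K) := by
      intro r
      have h0 : |β m t r - ψ t r| ≤ ‖β m t - g t‖ := by
        have hp := happrox t r
        have h2 : |β m t r - g t r| ≤ ‖β m t - g t‖ := by
          have := norm_le_pi_norm (β m t - g t) r
          simpa [Real.norm_eq_abs] using this
        calc |β m t r - ψ t r| = |ψ t r - β m t r| := abs_sub_comm _ _
        _ ≤ |g t r - β m t r| := hp
        _ = |β m t r - g t r| := abs_sub_comm _ _
        _ ≤ ‖β m t - g t‖ := h2
      have h1 : |(β m t r - ψ t r) * v t r| ≤ ‖β m t - g t‖ * |v t r| := by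
        rw [abs_mul]
        exact mul_le_mul_of_nonneg_right h0 (abs_nonneg _)
      have h2 : |(Real.exp (β m t r) - Real.exp (ψ t r)) * k t r|
          ≤ (Real.exp m * ‖β m t - g t‖) * K := by
        rw [abs_mul]
        apply mul_le_mul _ _ (abs_nonneg _) (by positivity)
        · refine le_trans (exp_diff_le (m:ℝ) _ _ ((abs_le.mp (hβ_bdd m t r)).2)
            ((abs_le.mp (hψ_bdd t r)).2)) ?_
          exact mul_le_mul_of_nonneg_left h0 (Real.exp_pos _).le
        · rw [abs_of_nonneg (hk_nn t r)]; exact hk_le t r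
      calc |(β m t r - ψ t r) * v t r - (Real.exp (β m t r) - Real.exp (ψ t r)) * k t r|
          ≤ |(β m t r - ψ t r) * v t r| + |(Real.exp (β m t r) - Real.exp (ψ t r)) * k t r| :=
            abs_sub _ _
      _ ≤ ‖β m t - g t‖ * |v t r| + (Real.exp m * ‖β m t - g t‖) * K := add_le_add h1 h2
      _ = ‖β m t - g t‖ * (|v t r| + Real.exp m * K) := by ring
    calc (∑ r, |(β m t r - ψ t r) * v t r - (Real.exp (β m t r) - Real.exp (ψ t r)) * k t r|)
        ≤ ∑ r, ‖β m t - g t‖ * (|v t r| + Real.exp m * K) := Finset.sum_le_sum fun r _ => hr r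
    _ = ‖β m t - g t‖ * (∑ r, (|v t r| + Real.exp m * K)) := by rw [Finset.mul_sum]
    _ ≤ ‖β m t - g t‖ * W t := by
        apply mul_le_mul_of_nonneg_left _ (norm_nonneg _)
        rw [Finset.sum_add_distrib, Finset.sum_const, nsmul_eq_mul, Finset.card_univ]
        simp only [hWdef]
        linarith
  -- integrability of the error majorant
  obtain ⟨Cg, hCg⟩ := hg_cs.exists_bound_of_continuous hg_cont
  have herr_int : Integrable (fun t => ‖β m t - g t‖ * W t) μ := by
    apply Integrable.bdd_mul (c := (m:ℝ) + Cg) hW_int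
    · exact (hβm_meas.sub hg_cont.measurable).norm.aestronglyMeasurable
    · refine Eventually.of_forall (fun t => ?_)
      rw [norm_norm]
      calc ‖β m t - g t‖ ≤ ‖β m t‖ + ‖g t‖ := norm_sub_le _ _
      _ ≤ (m:ℝ) + Cg := add_le_add (hβ_norm t) (hCg t)
  -- the weighted L¹ error is at most ε
  have h3 : ∫ t, ‖β m t - g t‖ * W t ∂μ ≤ (ε:ℝ) := by
    have hnn : ∀ t, 0 ≤ ‖β m t - g t‖ * W t := fun t => mul_nonneg (norm_nonneg _) (hW_nn t)
    have ha : ENNReal.ofReal (∫ t, ‖β m t - g t‖ * W t ∂μ)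
        = ∫⁻ t, ENNReal.ofReal (‖β m t - g t‖ * W t) ∂μ :=
      ofReal_integral_eq_lintegral_ofReal herr_int (Eventually.of_forall hnn)
    have hb : ∀ t, ENNReal.ofReal (‖β m t - g t‖ * W t)
        = (‖β m t - g t‖₊ : ENNReal) * ENNReal.ofReal (W t) := by
      intro t
      rw [ENNReal.ofReal_mul (norm_nonneg _)]
      congr 1
      exact ofReal_norm _
    have hgmeas : Measurable (fun t => (‖β m t - g t‖₊ : ENNReal)) :=
      (hβm_meas.sub hg_cont.measurable).nnnorm.coe_nnreal_ennreal
    have hc : ∫⁻ t, (‖β m t - g t‖₊ : ENNReal) * ENNReal.ofReal (W t) ∂μ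
        = ∫⁻ t, (‖β m t - g t‖₊ : ENNReal) ∂μ' := by
      rw [hμ'def, lintegral_withDensity_eq_lintegral_mul μ hW_meas.ennreal_ofReal hgmeas]
      apply lintegral_congr
      intro t
      simp [mul_comm]
    have hd : ∫⁻ t, (‖β m t - g t‖₊ : ENNReal) ∂μ' = eLpNorm (β m - g) 1 μ' := by
      rw [eLpNorm_one_eq_lintegral_enorm]
      apply lintegral_congr
      intro t
      rfl
    have : ENNReal.ofReal (∫ t, ‖β m t - g t‖ * W t ∂μ) ≤ ENNReal.ofReal (ε:ℝ) := by
      rw [ha]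
      simp_rw [hb]
      rw [hc, hd]
      exact hg_close
    exact (ENNReal.ofReal_le_ofReal_iff hεr.le).mp this
  -- conclude via step A
  have herr : ∫ t, f m t ∂μ ≤ (∫ t, Fψ t ∂μ) + (ε:ℝ) := by
    have h2 : ∫ t, (f m t - Fψ t) ∂μ ≤ ∫ t, ‖β m t - g t‖ * W t ∂μ :=
      integral_mono (hfm_int.sub hFψ_int) herr_int
        (fun t => le_trans (le_abs_self _) (hdiff t))
    rw [integral_sub hfm_int hFψ_int] at h2
    linarith
  have hA := stepA (m:ℝ) ψ (Nat.cast_nonneg m) hψ_cont hψ_cs hψ_supp hψ_bdd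
  have hFψ_eq : ∫ t, Fψ t ∂μ
      = ∫ t, (∑ r, (ψ t r * dw t r - (Real.exp (ψ t r) - 1) * kbar (c t) r)) ∂μ := by
    apply integral_congr_ae
    filter_upwards [hv_ae, haeIoo] with t h1 h2
    simp only [hFψdef]
    rw [h1, hk_eqc t (hIoosub h2)]
  calc ENNReal.ofReal (∫ t, f m t ∂μ)
      ≤ ENNReal.ofReal ((∫ t, Fψ t ∂μ) + (ε:ℝ)) := ENNReal.ofReal_le_ofReal herr
  _ ≤ ENNReal.ofReal (∫ t, Fψ t ∂μ) + ENNReal.ofReal (ε:ℝ) := ENNReal.ofReal_add_le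
  _ ≤ L + (ε : ℝ≥0∞) := by
      apply add_le_add
      · rw [hFψ_eq]; exact hA
      · exact le_of_eq ENNReal.ofReal_coe_nnreal
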